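/- arXiv:0911.1564 — 2 statements merged into one kernel-verified Lean document; each statement's English description precedes it below -/
import Mathlib

section
/- For any n×p matrix Φ and positive integers k, k' with k + k' ≤ p, δ_{k+k'}(Φ) ≤ (2√(kk')/(k+k'))·θ_{k,k'}(Φ) + max(δ_k(Φ), δ_{k'}(Φ)). -/
noncomputable def l2norm {p : ℕ} (c : Fin p → ℝ) : ℝ := Real.sqrt (∑ i, (c i)^2)

def IsSparse {p : ℕ} (k : ℕ) (c : Fin p → ℝ) : Prop :=
  (Finset.univ.filter (fun i => c i ≠ 0)).card ≤ k

/-- The restricted isometry constant `δ_k(Φ)`. -/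
noncomputable def ripConst {n p : ℕ} (Φ : Matrix (Fin n) (Fin p) ℝ) (k : ℕ) : ℝ :=
  sInf {δ : ℝ | 0 ≤ δ ∧ ∀ c : Fin p → ℝ, IsSparse k c →
    (1 - δ) * ∑ i, (c i)^2 ≤ (∑ i, (Φ.mulVec c i)^2) ∧
    (∑ i, (Φ.mulVec c i)^2) ≤ (1 + δ) * ∑ i, (c i)^2}

/-- The restricted orthogonality constant `θ_{k,k'}(Φ)`. -/
noncomputable def roConst {n p : ℕ} (Φ : Matrix (Fin n) (Fin p) ℝ) (k k' : ℕ) : ℝ :=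
  sInf {θ : ℝ | 0 ≤ θ ∧ ∀ c c' : Fin p → ℝ, IsSparse k c → IsSparse k' c' →
    (∀ i, c i = 0 ∨ c' i = 0) →
    |∑ i, (Φ.mulVec c i) * (Φ.mulVec c' i)| ≤ θ * l2norm c * l2norm c'}

section Aux
open Finset
variable {n p : ℕ}


lemma mulVec_sq_le (Φ : Matrix (Fin n) (Fin p) ℝ) (c : Fin p → ℝ) :
    ∑ i, (Φ.mulVec c i)^2 ≤ (∑ i, ∑ j, (Φ i j)^2) * ∑ j, (c j)^2 := by
  rw [Finset.sum_mul]
  refine Finset.sum_le_sum fun i _ => ?_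
  have h := Finset.sum_mul_sq_le_sq_mul_sq Finset.univ (fun j => Φ i j) c
  simpa [Matrix.mulVec, dotProduct] using h

lemma ripSet_nonempty (Φ : Matrix (Fin n) (Fin p) ℝ) (k : ℕ) :
    Set.Nonempty {δ : ℝ | 0 ≤ δ ∧ ∀ c : Fin p → ℝ, IsSparse k c →
      (1 - δ) * ∑ i, (c i)^2 ≤ (∑ i, (Φ.mulVec c i)^2) ∧
      (∑ i, (Φ.mulVec c i)^2) ≤ (1 + δ) * ∑ i, (c i)^2} := by
  refine ⟨1 + ∑ i, ∑ j, (Φ i j)^2, ?_, fun c _ => ?_⟩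
  · positivity
  have h1 := mulVec_sq_le Φ c
  have h2 : (0:ℝ) ≤ ∑ j, (c j)^2 := Finset.sum_nonneg fun j _ => sq_nonneg _
  have h3 : (0:ℝ) ≤ ∑ i, (Φ.mulVec c i)^2 := Finset.sum_nonneg fun i _ => sq_nonneg _
  constructor
  · nlinarith
  · nlinarith

lemma roSet_nonempty (Φ : Matrix (Fin n) (Fin p) ℝ) (k k' : ℕ) :
    Set.Nonempty {θ : ℝ | 0 ≤ θ ∧ ∀ c c' : Fin p → ℝ, IsSparse k c → IsSparse k' c' →
      (∀ i, c i = 0 ∨ c' i = 0) →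
      |∑ i, (Φ.mulVec c i) * (Φ.mulVec c' i)| ≤ θ * l2norm c * l2norm c'} := by
  refine ⟨∑ i, ∑ j, (Φ i j)^2, ?_, fun c c' _ _ _ => ?_⟩
  · positivity
  set C := ∑ i, ∑ j, (Φ i j)^2 with hC
  have hC0 : (0:ℝ) ≤ C := by positivity
  have h1 := mulVec_sq_le Φ c
  have h2 := mulVec_sq_le Φ c'
  have hcs := Finset.sum_mul_sq_le_sq_mul_sq Finset.univ (fun i => Φ.mulVec c i) (fun i => Φ.mulVec c' i)
  have hn : (0:ℝ) ≤ ∑ j, (c j)^2 := Finset.sum_nonneg fun j _ => sq_nonneg _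
  have hn' : (0:ℝ) ≤ ∑ j, (c' j)^2 := Finset.sum_nonneg fun j _ => sq_nonneg _
  have habs : |∑ i, (Φ.mulVec c i) * (Φ.mulVec c' i)|^2 ≤ (C * ∑ j, (c j)^2) * (C * ∑ j, (c' j)^2) := by
    rw [sq_abs]
    refine le_trans hcs ?_
    have h3 : (0:ℝ) ≤ ∑ i, (Φ.mulVec c i)^2 := Finset.sum_nonneg fun i _ => sq_nonneg _
    have h4 : (0:ℝ) ≤ ∑ i, (Φ.mulVec c' i)^2 := Finset.sum_nonneg fun i _ => sq_nonneg _
    exact mul_le_mul h1 h2 h4 (by positivity)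
  have key : |∑ i, (Φ.mulVec c i) * (Φ.mulVec c' i)| ≤ C * (Real.sqrt (∑ j, (c j)^2) * Real.sqrt (∑ j, (c' j)^2)) := by
    have h5 : C * (Real.sqrt (∑ j, (c j)^2) * Real.sqrt (∑ j, (c' j)^2)) =
        Real.sqrt ((C * ∑ j, (c j)^2) * (C * ∑ j, (c' j)^2)) := by
      rw [Real.sqrt_mul (by positivity), Real.sqrt_mul hC0, Real.sqrt_mul hC0]
      have : Real.sqrt C * Real.sqrt C = C := Real.mul_self_sqrt hC0
      linear_combination (-(Real.sqrt (∑ j, (c j)^2) * Real.sqrt (∑ j, (c' j)^2))) * this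
    rw [h5]
    calc |∑ i, (Φ.mulVec c i) * (Φ.mulVec c' i)|
        = Real.sqrt (|∑ i, (Φ.mulVec c i) * (Φ.mulVec c' i)|^2) := by
          rw [Real.sqrt_sq (abs_nonneg _)]
      _ ≤ _ := Real.sqrt_le_sqrt habs
  simpa [l2norm, mul_assoc] using key

lemma ripSet_isClosed (Φ : Matrix (Fin n) (Fin p) ℝ) (k : ℕ) :
    IsClosed {δ : ℝ | 0 ≤ δ ∧ ∀ c : Fin p → ℝ, IsSparse k c →
      (1 - δ) * ∑ i, (c i)^2 ≤ (∑ i, (Φ.mulVec c i)^2) ∧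
      (∑ i, (Φ.mulVec c i)^2) ≤ (1 + δ) * ∑ i, (c i)^2} := by
  have : {δ : ℝ | 0 ≤ δ ∧ ∀ c : Fin p → ℝ, IsSparse k c →
      (1 - δ) * ∑ i, (c i)^2 ≤ (∑ i, (Φ.mulVec c i)^2) ∧
      (∑ i, (Φ.mulVec c i)^2) ≤ (1 + δ) * ∑ i, (c i)^2} =
      {δ : ℝ | 0 ≤ δ} ∩ ⋂ (c : Fin p → ℝ), ⋂ (_ : IsSparse k c),
      ({δ : ℝ | (1 - δ) * ∑ i, (c i)^2 ≤ (∑ i, (Φ.mulVec c i)^2)} ∩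
       {δ : ℝ | (∑ i, (Φ.mulVec c i)^2) ≤ (1 + δ) * ∑ i, (c i)^2}) := by
    ext δ
    simp only [Set.mem_setOf_eq, Set.mem_inter_iff, Set.mem_iInter]
  rw [this]
  refine isClosed_Ici.inter (isClosed_iInter fun c => isClosed_iInter fun _ => IsClosed.inter ?_ ?_)
  · exact isClosed_le (by fun_prop) continuous_const
  · exact isClosed_le continuous_const (by fun_prop)

lemma roSet_isClosed (Φ : Matrix (Fin n) (Fin p) ℝ) (k k' : ℕ) :
    IsClosed {θ : ℝ | 0 ≤ θ ∧ ∀ c c' : Fin p → ℝ, IsSparse k c → IsSparse k' c' →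
      (∀ i, c i = 0 ∨ c' i = 0) →
      |∑ i, (Φ.mulVec c i) * (Φ.mulVec c' i)| ≤ θ * l2norm c * l2norm c'} := by
  have : {θ : ℝ | 0 ≤ θ ∧ ∀ c c' : Fin p → ℝ, IsSparse k c → IsSparse k' c' →
      (∀ i, c i = 0 ∨ c' i = 0) →
      |∑ i, (Φ.mulVec c i) * (Φ.mulVec c' i)| ≤ θ * l2norm c * l2norm c'} =
      {θ : ℝ | 0 ≤ θ} ∩ ⋂ (c : Fin p → ℝ), ⋂ (c' : Fin p → ℝ), ⋂ (_ : IsSparse k c),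
      ⋂ (_ : IsSparse k' c'), ⋂ (_ : ∀ i, c i = 0 ∨ c' i = 0),
      {θ : ℝ | |∑ i, (Φ.mulVec c i) * (Φ.mulVec c' i)| ≤ θ * l2norm c * l2norm c'} := by
    ext θ
    simp only [Set.mem_setOf_eq, Set.mem_inter_iff, Set.mem_iInter]
  rw [this]
  refine isClosed_Ici.inter (isClosed_iInter fun c => isClosed_iInter fun c' =>
    isClosed_iInter fun _ => isClosed_iInter fun _ => isClosed_iInter fun _ => ?_)
  exact isClosed_le continuous_const (by fun_prop)

lemma exists_split (k k' : ℕ) (hkk : k ≤ k') (c : Fin p → ℝ)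
    (hc : IsSparse (k + k') c) :
    ∃ c₁ c₂ : Fin p → ℝ, c = c₁ + c₂ ∧ IsSparse k c₁ ∧ IsSparse k' c₂ ∧
      (∀ i, c₁ i = 0 ∨ c₂ i = 0) ∧
      (k' : ℝ) * ∑ i, (c₁ i)^2 ≤ (k : ℝ) * ∑ i, (c₂ i)^2 := by
  classical
  set T : Finset (Fin p) := Finset.univ.filter (fun i => c i ≠ 0) with hT
  set r : ℕ := min T.card k' with hr
  have hrle : r ≤ T.card := min_le_left _ _
  obtain ⟨T₂, hT₂mem, hT₂max⟩ := (T.powersetCard r).exists_max_image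
    (fun S => ∑ j ∈ S, (c j)^2) (Finset.powersetCard_nonempty.2 hrle)
  rw [Finset.mem_powersetCard] at hT₂mem
  obtain ⟨hT₂sub, hT₂card⟩ := hT₂mem
  set T₁ : Finset (Fin p) := T \ T₂ with hT₁
  have hT₁card : T₁.card = T.card - r := by
    rw [hT₁, Finset.card_sdiff_of_subset hT₂sub, hT₂card]
  -- element comparison
  have hcomp : ∀ i ∈ T₁, ∀ j ∈ T₂, (c i)^2 ≤ (c j)^2 := by
    intro i hi j hj
    by_contra hlt
    push_neg at hlt
    have hiT : i ∈ T := (Finset.mem_sdiff.1 hi).1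
    have hiT₂ : i ∉ T₂ := (Finset.mem_sdiff.1 hi).2
    set T₂' : Finset (Fin p) := insert i (T₂.erase j) with hT₂'
    have hinotin : i ∉ T₂.erase j := fun h => hiT₂ (Finset.mem_of_mem_erase h)
    have hsub' : T₂' ⊆ T := by
      intro x hx
      rcases Finset.mem_insert.1 hx with rfl | hx
      · exact hiT
      · exact hT₂sub (Finset.mem_of_mem_erase hx)
    have hcard' : T₂'.card = r := by
      rw [hT₂', Finset.card_insert_of_notMem hinotin, Finset.card_erase_of_mem hj, hT₂card]
      have : 1 ≤ r := by
        rw [← hT₂card]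
        exact Finset.card_pos.2 ⟨j, hj⟩
      omega
    have hle := hT₂max T₂' (Finset.mem_powersetCard.2 ⟨hsub', hcard'⟩)
    have hsum' : ∑ x ∈ T₂', (c x)^2 = (c i)^2 + (∑ x ∈ T₂, (c x)^2 - (c j)^2) := by
      rw [hT₂', Finset.sum_insert hinotin]
      congr 1
      have h : (c j)^2 + ∑ x ∈ T₂.erase j, (c x)^2 = ∑ x ∈ T₂, (c x)^2 :=
        Finset.add_sum_erase T₂ (fun x => (c x)^2) hj
      linarith
    rw [hsum'] at hle
    linarith
  -- define the split
  refine ⟨fun i => if i ∈ T₁ then c i else 0, fun i => if i ∈ T₂ then c i else 0, ?_, ?_, ?_, ?_, ?_⟩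
  · funext i
    by_cases h2 : i ∈ T₂
    · have h1 : i ∉ T₁ := fun h => (Finset.mem_sdiff.1 h).2 h2
      simp [h1, h2]
    · by_cases hT' : i ∈ T
      · have h1 : i ∈ T₁ := Finset.mem_sdiff.2 ⟨hT', h2⟩
        simp [h1, h2]
      · have : c i = 0 := by
          by_contra hne
          exact hT' (Finset.mem_filter.2 ⟨Finset.mem_univ _, hne⟩)
        have h1 : i ∉ T₁ := fun h => hT' (Finset.mem_sdiff.1 h).1
        simp [h1, h2, this]
  · -- IsSparse k c₁
    unfold IsSparse
    refine le_trans (Finset.card_le_card (t := T₁) ?_) ?_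
    · intro i hi
      simp only [Finset.mem_filter] at hi
      by_contra h
      exact hi.2 (by simp [h])
    · rw [hT₁card]
      have := hc
      unfold IsSparse at this
      rw [← hT] at this
      omega
  · unfold IsSparse
    refine le_trans (Finset.card_le_card (t := T₂) ?_) ?_
    · intro i hi
      simp only [Finset.mem_filter] at hi
      by_contra h
      exact hi.2 (by simp [h])
    · rw [hT₂card]; exact min_le_right _ _
  · intro i
    by_cases h2 : i ∈ T₂
    · left
      have h1 : i ∉ T₁ := fun h => (Finset.mem_sdiff.1 h).2 h2
      simp [h1]
    · right; simp [h2]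
  · -- key inequality
    have hs1 : ∑ i, (if i ∈ T₁ then c i else 0)^2 = ∑ i ∈ T₁, (c i)^2 := by
      simp [apply_ite (fun x : ℝ => x^2), Finset.sum_ite_mem]
    have hs2 : ∑ i, (if i ∈ T₂ then c i else 0)^2 = ∑ i ∈ T₂, (c i)^2 := by
      simp [apply_ite (fun x : ℝ => x^2), Finset.sum_ite_mem]
    rw [hs1, hs2]
    set s := ∑ i ∈ T₁, (c i)^2 with hs
    set b := ∑ i ∈ T₂, (c i)^2 with hb
    have hbnn : 0 ≤ b := Finset.sum_nonneg fun i _ => sq_nonneg _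
    by_cases hT₁e : T₁ = ∅
    · have : s = 0 := by rw [hs, hT₁e, Finset.sum_empty]
      rw [this, mul_zero]
      positivity
    · -- T₁ nonempty ⇒ r = k' and card T₁ ≤ k
      have hTcard : T.card ≤ k + k' := by
        have := hc; unfold IsSparse at this; rw [← hT] at this; exact this
      have hT₁pos : 0 < T₁.card := Finset.card_pos.2 (Finset.nonempty_iff_ne_empty.2 hT₁e)
      have hrk' : r = k' := by
        rw [hr]
        rcases Nat.le_total T.card k' with h | h
        · exfalso; rw [hT₁card, hr] at hT₁pos; omega
        · exact min_eq_right h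
      have hT₁k : T₁.card ≤ k := by rw [hT₁card]; omega
      -- double counting
      have key : (T₂.card : ℝ) * s ≤ (T₁.card : ℝ) * b := by
        have h1 : ∑ i ∈ T₁, ∑ _j ∈ T₂, (c i)^2 ≤ ∑ i ∈ T₁, ∑ j ∈ T₂, (c j)^2 :=
          Finset.sum_le_sum fun i hi => Finset.sum_le_sum fun j hj => hcomp i hi j hj
        have h2 : ∑ i ∈ T₁, ∑ _j ∈ T₂, (c i)^2 = (T₂.card : ℝ) * s := by
          simp [Finset.sum_const, nsmul_eq_mul, hs, Finset.mul_sum, mul_comm]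
        have h3 : ∑ i ∈ T₁, ∑ j ∈ T₂, (c j)^2 = (T₁.card : ℝ) * b := by
          simp [Finset.sum_const, nsmul_eq_mul, hb]
        linarith
      have : (k' : ℝ) * s ≤ (k : ℝ) * b := by
        rw [hT₂card, hrk'] at key
        have hcast : (T₁.card : ℝ) ≤ (k : ℝ) := Nat.cast_le.2 hT₁k
        nlinarith
      exact this

lemma ripConst_mem (Φ : Matrix (Fin n) (Fin p) ℝ) (k : ℕ) :
    ripConst Φ k ∈ {δ : ℝ | 0 ≤ δ ∧ ∀ c : Fin p → ℝ, IsSparse k c →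
      (1 - δ) * ∑ i, (c i)^2 ≤ (∑ i, (Φ.mulVec c i)^2) ∧
      (∑ i, (Φ.mulVec c i)^2) ≤ (1 + δ) * ∑ i, (c i)^2} :=
  (ripSet_isClosed Φ k).csInf_mem (ripSet_nonempty Φ k) ⟨0, fun _ hx => hx.1⟩

lemma roConst_mem (Φ : Matrix (Fin n) (Fin p) ℝ) (k k' : ℕ) :
    roConst Φ k k' ∈ {θ : ℝ | 0 ≤ θ ∧ ∀ c c' : Fin p → ℝ, IsSparse k c → IsSparse k' c' →
      (∀ i, c i = 0 ∨ c' i = 0) →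
      |∑ i, (Φ.mulVec c i) * (Φ.mulVec c' i)| ≤ θ * l2norm c * l2norm c'} :=
  (roSet_isClosed Φ k k').csInf_mem (roSet_nonempty Φ k k') ⟨0, fun _ hx => hx.1⟩

lemma exists_split' (k k' : ℕ) (hk : 0 < k) (hk' : 0 < k') (c : Fin p → ℝ)
    (hc : IsSparse (k + k') c) :
    ∃ c₁ c₂ : Fin p → ℝ, c = c₁ + c₂ ∧ IsSparse k c₁ ∧ IsSparse k' c₂ ∧
      (∀ i, c₁ i = 0 ∨ c₂ i = 0) ∧
      ((k : ℝ) + k')^2 * ((∑ i, (c₁ i)^2) * (∑ i, (c₂ i)^2)) ≤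
        (k : ℝ) * k' * ((∑ i, (c₁ i)^2) + (∑ i, (c₂ i)^2))^2 := by
  rcases le_total k k' with hkk | hkk
  · obtain ⟨c₁, c₂, hsum, hs1, hs2, hdisj, hineq⟩ := exists_split k k' hkk c hc
    refine ⟨c₁, c₂, hsum, hs1, hs2, hdisj, ?_⟩
    set s := ∑ i, (c₁ i)^2
    set b := ∑ i, (c₂ i)^2
    have hsnn : 0 ≤ s := Finset.sum_nonneg fun i _ => sq_nonneg _
    have hbnn : 0 ≤ b := Finset.sum_nonneg fun i _ => sq_nonneg _
    have hkr : (0:ℝ) < k := Nat.cast_pos.2 hk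
    have hkr' : (0:ℝ) < k' := Nat.cast_pos.2 hk'
    have hkkr : (k:ℝ) ≤ k' := Nat.cast_le.2 hkk
    have h1 : (0:ℝ) ≤ (k:ℝ) * b - k' * s := by linarith
    have h2 : (0:ℝ) ≤ (k':ℝ) * b - k * s := by nlinarith
    nlinarith [mul_nonneg h1 h2]
  · have hc' : IsSparse (k' + k) c := by rwa [Nat.add_comm] at hc
    obtain ⟨c₂, c₁, hsum, hs2, hs1, hdisj, hineq⟩ := exists_split k' k hkk c hc'
    refine ⟨c₁, c₂, by rw [hsum]; ring, hs1, hs2, fun i => (hdisj i).symm, ?_⟩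
    set s := ∑ i, (c₁ i)^2
    set b := ∑ i, (c₂ i)^2
    have hsnn : 0 ≤ s := Finset.sum_nonneg fun i _ => sq_nonneg _
    have hbnn : 0 ≤ b := Finset.sum_nonneg fun i _ => sq_nonneg _
    have hkr : (0:ℝ) < k := Nat.cast_pos.2 hk
    have hkr' : (0:ℝ) < k' := Nat.cast_pos.2 hk'
    have hkkr : (k':ℝ) ≤ k := Nat.cast_le.2 hkk
    have h1 : (0:ℝ) ≤ (k':ℝ) * s - k * b := by linarith
    have h2 : (0:ℝ) ≤ (k:ℝ) * s - k' * b := by nlinarith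
    nlinarith [mul_nonneg h1 h2]

end Aux

theorem ripConst_le_scaled_roConst_add_max (n p k k' : ℕ) (Φ : Matrix (Fin n) (Fin p) ℝ)
    (hk : 0 < k) (hk' : 0 < k') (hp : k + k' ≤ p) :
    ripConst Φ (k + k') ≤
      (2 * Real.sqrt ((k : ℝ) * (k' : ℝ)) / ((k : ℝ) + (k' : ℝ))) * roConst Φ k k' +
        max (ripConst Φ k) (ripConst Φ k') := by
  obtain ⟨hθ0, hθ⟩ := roConst_mem Φ k k'
  obtain ⟨hd0k, hdk⟩ := ripConst_mem Φ k
  obtain ⟨hd0k', hdk'⟩ := ripConst_mem Φ k'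
  set θ := roConst Φ k k'
  set δ := max (ripConst Φ k) (ripConst Φ k') with hδ
  have hδ0 : 0 ≤ δ := le_trans hd0k (le_max_left _ _)
  have hkr : (0:ℝ) < k := Nat.cast_pos.2 hk
  have hkr' : (0:ℝ) < k' := Nat.cast_pos.2 hk'
  have hsumpos : (0:ℝ) < (k:ℝ) + k' := by linarith
  set A : ℝ := 2 * Real.sqrt ((k : ℝ) * (k' : ℝ)) / ((k : ℝ) + (k' : ℝ)) with hA
  have hA0 : 0 ≤ A := by positivity
  apply csInf_le ⟨0, fun x hx => hx.1⟩
  refine ⟨by positivity, fun c hc => ?_⟩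
  obtain ⟨c₁, c₂, hsum, hs1, hs2, hdisj, hprod⟩ := exists_split' k k' hk hk' c hc
  set s := ∑ i, (c₁ i)^2 with hsdef
  set b := ∑ i, (c₂ i)^2 with hbdef
  have hsnn : 0 ≤ s := Finset.sum_nonneg fun i _ => sq_nonneg _
  have hbnn : 0 ≤ b := Finset.sum_nonneg fun i _ => sq_nonneg _
  obtain ⟨hlow1, hup1⟩ := hdk c₁ hs1
  obtain ⟨hlow2, hup2⟩ := hdk' c₂ hs2
  rw [← hsdef] at hlow1 hup1
  rw [← hbdef] at hlow2 hup2
  have hC := hθ c₁ c₂ hs1 hs2 hdisj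
  set X₁ := ∑ i, (Φ.mulVec c₁ i)^2
  set X₂ := ∑ i, (Φ.mulVec c₂ i)^2
  set C := ∑ i, (Φ.mulVec c₁ i) * (Φ.mulVec c₂ i) with hCdef
  -- norm decomposition
  have hnorm : ∑ i, (c i)^2 = s + b := by
    rw [hsdef, hbdef, ← Finset.sum_add_distrib]
    refine Finset.sum_congr rfl fun i _ => ?_
    rcases hdisj i with h | h <;> simp [hsum, h] <;> ring
  have hphi : ∑ i, (Φ.mulVec c i)^2 = X₁ + X₂ + 2 * C := by
    have hmv : Φ.mulVec c = fun i => Φ.mulVec c₁ i + Φ.mulVec c₂ i := by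
      rw [hsum, Matrix.mulVec_add]; rfl
    calc ∑ i, (Φ.mulVec c i)^2
        = ∑ i, ((Φ.mulVec c₁ i)^2 + (Φ.mulVec c₂ i)^2
            + 2 * ((Φ.mulVec c₁ i) * (Φ.mulVec c₂ i))) := by
          refine Finset.sum_congr rfl fun i _ => ?_
          rw [hmv]; ring
      _ = X₁ + X₂ + 2 * C := by
          rw [Finset.sum_add_distrib, Finset.sum_add_distrib, ← Finset.mul_sum]
  -- cross term bound
  have hsqrt : Real.sqrt s * Real.sqrt b * ((k:ℝ) + k') ≤
      Real.sqrt ((k:ℝ) * k') * (s + b) := by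
    have e1 : Real.sqrt s * Real.sqrt b * ((k:ℝ) + k') =
        Real.sqrt (((k : ℝ) + k')^2 * (s * b)) := by
      rw [Real.sqrt_mul (by positivity), Real.sqrt_sq hsumpos.le, Real.sqrt_mul hsnn]
      ring
    have e2 : Real.sqrt ((k : ℝ) * k' * (s + b)^2) =
        Real.sqrt ((k:ℝ) * k') * (s + b) := by
      rw [Real.sqrt_mul (by positivity : (0:ℝ) ≤ (k:ℝ) * k') ((s + b)^2),
        Real.sqrt_sq (by linarith : (0:ℝ) ≤ s + b)]
    rw [e1, ← e2]
    exact Real.sqrt_le_sqrt hprod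
  have habs : |C| ≤ θ * (Real.sqrt s * Real.sqrt b) := by
    have : l2norm c₁ = Real.sqrt s := rfl
    have : l2norm c₂ = Real.sqrt b := rfl
    calc |C| ≤ θ * l2norm c₁ * l2norm c₂ := hC
      _ = θ * (Real.sqrt s * Real.sqrt b) := by rw [l2norm, l2norm, ← hsdef, ← hbdef]; ring
  have hcross : 2 * |C| ≤ A * θ * (s + b) := by
    have h1 : 2 * |C| * ((k:ℝ) + k') ≤ 2 * θ * (Real.sqrt ((k:ℝ) * k') * (s + b)) := by
      have h2 : 2 * |C| * ((k:ℝ) + k') ≤ 2 * θ * (Real.sqrt s * Real.sqrt b * ((k:ℝ) + k')) := by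
        nlinarith [abs_nonneg C]
      refine le_trans h2 ?_
      have := mul_le_mul_of_nonneg_left hsqrt (by positivity : (0:ℝ) ≤ 2 * θ)
      linarith
    rw [hA]
    rw [div_mul_eq_mul_div, div_mul_eq_mul_div, le_div_iff₀ hsumpos]
    linarith
  have habs1 : C ≤ |C| := le_abs_self C
  have habs2 : -|C| ≤ C := neg_abs_le C
  have hmax1 : ripConst Φ k ≤ δ := le_max_left _ _
  have hmax2 : ripConst Φ k' ≤ δ := le_max_right _ _
  have hm1 : ripConst Φ k * s ≤ δ * s := mul_le_mul_of_nonneg_right hmax1 hsnn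
  have hm2 : ripConst Φ k' * b ≤ δ * b := mul_le_mul_of_nonneg_right hmax2 hbnn
  rw [hnorm, hphi]
  constructor
  · linarith [hcross, hm1, hm2, hlow1, hlow2, habs2]
  · linarith [hcross, hm1, hm2, hup1, hup2, habs1]
end

section
/- For any n×p matrix Φ and positive integer k with 3k ≤ p, δ_{3k}(Φ) ≤ (1/3)·δ_k(Φ) + (√2 + 2/3)·δ_{2k}(Φ). -/
namespace RipAux

variable {n p : ℕ} (Φ : Matrix (Fin n) (Fin p) ℝ)

def N {p : ℕ} (c : Fin p → ℝ) : ℝ := ∑ i, (c i)^2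
def Q (c : Fin p → ℝ) : ℝ := ∑ i, (Φ.mulVec c i)^2
def B (c c' : Fin p → ℝ) : ℝ := ∑ i, (Φ.mulVec c i) * (Φ.mulVec c' i)

def ripSet (k : ℕ) : Set ℝ := {δ : ℝ | 0 ≤ δ ∧ ∀ c : Fin p → ℝ, IsSparse k c →
    (1 - δ) * N c ≤ Q Φ c ∧ Q Φ c ≤ (1 + δ) * N c}

lemma N_nonneg (c : Fin p → ℝ) : 0 ≤ N c := Finset.sum_nonneg fun i _ => sq_nonneg _
lemma Q_nonneg (c : Fin p → ℝ) : 0 ≤ Q Φ c := Finset.sum_nonneg fun i _ => sq_nonneg _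

lemma ripSet_nonempty (k : ℕ) : (ripSet Φ k).Nonempty := by
  refine ⟨(∑ i, ∑ j, (Φ i j)^2) + 1, ?_, fun c _ => ⟨?_, ?_⟩⟩
  · positivity
  · have h1 : (1 - ((∑ i, ∑ j, (Φ i j)^2) + 1)) * N c ≤ 0 := by
      have : (0:ℝ) ≤ ∑ i, ∑ j, (Φ i j)^2 := by positivity
      nlinarith [N_nonneg c]
    linarith [Q_nonneg Φ c]
  · have key : Q Φ c ≤ (∑ i, ∑ j, (Φ i j)^2) * N c := by
      unfold Q N
      rw [Finset.sum_mul]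
      refine Finset.sum_le_sum fun i _ => ?_
      have := Finset.sum_mul_sq_le_sq_mul_sq Finset.univ (fun j => Φ i j) c
      simpa [Matrix.mulVec, dotProduct] using this
    have : (0:ℝ) ≤ ∑ i, ∑ j, (Φ i j)^2 := by positivity
    nlinarith [N_nonneg c]

lemma ripSet_bddBelow (k : ℕ) : BddBelow (ripSet Φ k) := ⟨0, fun δ hδ => hδ.1⟩

lemma ripSet_closed (k : ℕ) : IsClosed (ripSet Φ k) := by
  have h : ripSet Φ k = Set.Ici 0 ∩ ⋂ c : Fin p → ℝ,
      {δ : ℝ | IsSparse k c → ((1 - δ) * N c ≤ Q Φ c ∧ Q Φ c ≤ (1 + δ) * N c)} := by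
    ext δ; simp [ripSet, Set.mem_iInter]
  rw [h]
  refine isClosed_Ici.inter (isClosed_iInter fun c => ?_)
  by_cases hc : IsSparse k c
  · simp only [hc, forall_true_left]
    exact (isClosed_le (Continuous.mul (continuous_const.sub continuous_id) continuous_const)
        continuous_const).inter
      (isClosed_le continuous_const
        (Continuous.mul (continuous_const.add continuous_id) continuous_const))
  · simp [hc]

lemma ripConst_eq (k : ℕ) : ripConst Φ k = sInf (ripSet Φ k) := rfl

lemma rip_mem (k : ℕ) : ripConst Φ k ∈ ripSet Φ k := by
  rw [ripConst_eq]
  exact (ripSet_closed Φ k).csInf_mem (ripSet_nonempty Φ k) (ripSet_bddBelow Φ k)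

lemma rip_nonneg (k : ℕ) : 0 ≤ ripConst Φ k := (rip_mem Φ k).1

lemma rip_mono {k k' : ℕ} (h : k ≤ k') : ripConst Φ k ≤ ripConst Φ k' := by
  rw [ripConst_eq, ripConst_eq]
  refine csInf_le_csInf (ripSet_bddBelow Φ k) (ripSet_nonempty Φ k') fun δ hδ => ?_
  exact ⟨hδ.1, fun c hc => hδ.2 c (hc.trans h)⟩


lemma sparse_pair {k k' : ℕ} {a b : Fin p → ℝ} (ha : IsSparse k a) (hb : IsSparse k' b)
    (f : Fin p → ℝ) (hf : ∀ i, a i = 0 → b i = 0 → f i = 0) : IsSparse (k + k') f := by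
  have hsub : Finset.univ.filter (fun i => f i ≠ 0) ⊆
      Finset.univ.filter (fun i => a i ≠ 0) ∪ Finset.univ.filter (fun i => b i ≠ 0) := by
    intro i hi
    simp only [Finset.mem_filter, Finset.mem_union, Finset.mem_univ, true_and] at hi ⊢
    by_contra hcon
    push_neg at hcon
    exact hi (hf i hcon.1 hcon.2)
  calc (Finset.univ.filter (fun i => f i ≠ 0)).card
      ≤ _ := Finset.card_le_card hsub
    _ ≤ _ + _ := Finset.card_union_le _ _
    _ ≤ k + k' := Nat.add_le_add ha hb

lemma sparse_smul {k : ℕ} {a : Fin p → ℝ} (ha : IsSparse k a) (t : ℝ) : IsSparse k (t • a) := by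
  refine le_trans (Finset.card_le_card ?_) ha
  intro i hi
  simp only [Finset.mem_filter, Finset.mem_univ, true_and, Pi.smul_apply, smul_eq_mul] at hi ⊢
  intro h; exact hi (by rw [h, mul_zero])

lemma N_add_disj {a b : Fin p → ℝ} (hd : ∀ i, a i = 0 ∨ b i = 0) : N (a + b) = N a + N b := by
  unfold N
  rw [← Finset.sum_add_distrib]
  refine Finset.sum_congr rfl fun i _ => ?_
  rcases hd i with h | h <;> simp [h]

lemma N_sub_disj {a b : Fin p → ℝ} (hd : ∀ i, a i = 0 ∨ b i = 0) : N (a - b) = N a + N b := by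
  unfold N
  rw [← Finset.sum_add_distrib]
  refine Finset.sum_congr rfl fun i _ => ?_
  rcases hd i with h | h <;> simp [h]

lemma N_smul (t : ℝ) (a : Fin p → ℝ) : N (t • a) = t^2 * N a := by
  unfold N
  rw [Finset.mul_sum]
  refine Finset.sum_congr rfl fun i _ => ?_
  simp [mul_pow]

lemma Q_add (a b : Fin p → ℝ) : Q Φ (a + b) = Q Φ a + 2 * B Φ a b + Q Φ b := by
  unfold Q B
  simp only [Matrix.mulVec_add, Pi.add_apply]
  rw [Finset.mul_sum, ← Finset.sum_add_distrib, ← Finset.sum_add_distrib]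
  exact Finset.sum_congr rfl fun i _ => by ring

lemma Q_sub (a b : Fin p → ℝ) : Q Φ (a - b) = Q Φ a - 2 * B Φ a b + Q Φ b := by
  unfold Q B
  simp only [Matrix.mulVec_sub, Pi.sub_apply]
  rw [Finset.mul_sum, ← Finset.sum_sub_distrib, ← Finset.sum_add_distrib]
  exact Finset.sum_congr rfl fun i _ => by ring

lemma B_smul (t s : ℝ) (a b : Fin p → ℝ) : B Φ (t • a) (s • b) = t * s * B Φ a b := by
  unfold B
  rw [Finset.mul_sum]
  refine Finset.sum_congr rfl fun i _ => ?_
  simp [Matrix.mulVec_smul]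
  ring

lemma polar (k : ℕ) (a b : Fin p → ℝ) (ha : IsSparse k a) (hb : IsSparse k b)
    (hd : ∀ i, a i = 0 ∨ b i = 0) :
    |B Φ a b| ≤ ripConst Φ (2 * k) * ((N a + N b) / 2) := by
  obtain ⟨hδ0, hδ⟩ := rip_mem Φ (2 * k)
  have hadd : IsSparse (2 * k) (a + b) := by
    rw [two_mul]
    exact sparse_pair ha hb _ (fun i h1 h2 => by simp [Pi.add_apply, h1, h2])
  have hsub : IsSparse (2 * k) (a - b) := by
    rw [two_mul]
    exact sparse_pair ha hb _ (fun i h1 h2 => by simp [Pi.sub_apply, h1, h2])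
  have h1 := hδ (a + b) hadd
  have h2 := hδ (a - b) hsub
  rw [N_add_disj hd, Q_add Φ a b] at h1
  rw [N_sub_disj hd, Q_sub Φ a b] at h2
  rw [abs_le]
  constructor <;> nlinarith [h1.1, h1.2, h2.1, h2.2]

lemma eq_zero_of_N_eq_zero {a : Fin p → ℝ} (hA : N a = 0) : a = 0 := by
  funext i
  have := (Finset.sum_eq_zero_iff_of_nonneg (fun i _ => sq_nonneg (a i))).1 hA i (Finset.mem_univ i)
  exact pow_eq_zero_iff (two_ne_zero) |>.1 this

lemma theta_kk (k : ℕ) (a b : Fin p → ℝ) (ha : IsSparse k a) (hb : IsSparse k b)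
    (hd : ∀ i, a i = 0 ∨ b i = 0) :
    |B Φ a b| ≤ ripConst Φ (2 * k) * (Real.sqrt (N a) * Real.sqrt (N b)) := by
  by_cases hA : N a = 0
  · have : B Φ a b = 0 := by
      unfold B; rw [eq_zero_of_N_eq_zero hA]; simp [Matrix.mulVec_zero]
    rw [this, abs_zero]
    have := rip_nonneg Φ (2 * k)
    positivity
  by_cases hB : N b = 0
  · have : B Φ a b = 0 := by
      unfold B; rw [eq_zero_of_N_eq_zero hB]; simp [Matrix.mulVec_zero]
    rw [this, abs_zero]
    have := rip_nonneg Φ (2 * k)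
    positivity
  have hA' : 0 < N a := lt_of_le_of_ne (N_nonneg a) (Ne.symm hA)
  have hB' : 0 < N b := lt_of_le_of_ne (N_nonneg b) (Ne.symm hB)
  set α := Real.sqrt (N a) with hα
  set β := Real.sqrt (N b) with hβ
  have hαpos : 0 < α := Real.sqrt_pos.2 hA'
  have hβpos : 0 < β := Real.sqrt_pos.2 hB'
  set t := Real.sqrt (β / α) with ht
  have htpos : 0 < t := Real.sqrt_pos.2 (div_pos hβpos hαpos)
  have ht2 : t^2 = β / α := Real.sq_sqrt (le_of_lt (div_pos hβpos hαpos))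
  have hα2 : α^2 = N a := Real.sq_sqrt (le_of_lt hA')
  have hβ2 : β^2 = N b := Real.sq_sqrt (le_of_lt hB')
  have hd' : ∀ i, (t • a) i = 0 ∨ (t⁻¹ • b) i = 0 := by
    intro i
    rcases hd i with h | h <;> simp [h]
  have key := polar Φ k (t • a) (t⁻¹ • b) (sparse_smul ha t) (sparse_smul hb t⁻¹) hd'
  rw [B_smul, N_smul, N_smul, mul_inv_cancel₀ (ne_of_gt htpos), one_mul] at key
  have hrw : (t^2 * N a + (t⁻¹)^2 * N b) / 2 = α * β := by
    rw [← hα2, ← hβ2, inv_pow, ht2]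
    field_simp
    ring
  rw [hrw] at key
  exact key


lemma exists_topk (f : Fin p → ℝ) (s : Finset (Fin p)) (k : ℕ) (hk : 0 < k)
    (hcard : s.card ≤ 3 * k) (hf : ∀ i ∈ s, 0 ≤ f i) :
    ∃ T ⊆ s, T.card = min k s.card ∧ ∑ i ∈ s \ T, f i ≤ 2 * ∑ i ∈ T, f i := by
  have hne : (s.powersetCard (min k s.card)).Nonempty := by
    obtain ⟨T0, hT0s, hT0c⟩ := Finset.exists_subset_card_eq (min_le_right k s.card)
    exact ⟨T0, Finset.mem_powersetCard.2 ⟨hT0s, hT0c⟩⟩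
  obtain ⟨T, hTmem, hmax⟩ := Finset.exists_max_image _ (fun T => ∑ i ∈ T, f i) hne
  obtain ⟨hTs, hTcard⟩ := Finset.mem_powersetCard.1 hTmem
  refine ⟨T, hTs, hTcard, ?_⟩
  by_cases hsk : s.card ≤ k
  · have hTeq : T = s := Finset.eq_of_subset_of_card_le hTs (by omega)
    rw [hTeq, Finset.sdiff_self, Finset.sum_empty]
    have := Finset.sum_nonneg hf
    linarith
  · have hTk : T.card = k := by omega
    have swap : ∀ j ∈ s \ T, ∀ i ∈ T, f j ≤ f i := by
      intro j hj i hi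
      obtain ⟨hjs, hjT⟩ := Finset.mem_sdiff.1 hj
      have hjTe : j ∉ T.erase i := fun h => hjT (Finset.erase_subset _ _ h)
      have hins : insert j (T.erase i) ∈ s.powersetCard (min k s.card) := by
        rw [Finset.mem_powersetCard]
        constructor
        · intro x hx
          rcases Finset.mem_insert.1 hx with rfl | hx
          · exact hjs
          · exact hTs (Finset.erase_subset _ _ hx)
        · rw [Finset.card_insert_of_notMem hjTe, Finset.card_erase_of_mem hi]
          omega
      have hle := hmax _ hins
      rw [Finset.sum_insert hjTe] at hle
      have herase := Finset.add_sum_erase T f hi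
      simp only at hle herase
      linarith
    have key : (T.card : ℝ) * ∑ j ∈ s \ T, f j ≤ ((s \ T).card : ℝ) * ∑ i ∈ T, f i := by
      calc (T.card : ℝ) * ∑ j ∈ s \ T, f j
          = ∑ j ∈ s \ T, ∑ _i ∈ T, f j := by
            simp [Finset.sum_const, nsmul_eq_mul, Finset.mul_sum]
        _ ≤ ∑ j ∈ s \ T, ∑ i ∈ T, f i :=
            Finset.sum_le_sum fun j hj => Finset.sum_le_sum fun i hi => swap j hj i hi
        _ = ((s \ T).card : ℝ) * ∑ i ∈ T, f i := by
            simp [Finset.sum_const, nsmul_eq_mul]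
    have hTsum : 0 ≤ ∑ i ∈ T, f i := Finset.sum_nonneg fun i hi => hf i (hTs hi)
    have hcd : (s \ T).card = s.card - T.card := Finset.card_sdiff_of_subset hTs
    have hkpos : (0 : ℝ) < k := by exact_mod_cast hk
    have hc2 : ((s \ T).card : ℝ) ≤ 2 * k := by
      have : (s \ T).card ≤ 2 * k := by omega
      exact_mod_cast this
    have hsum2 : ((s \ T).card : ℝ) * ∑ i ∈ T, f i ≤ 2 * k * ∑ i ∈ T, f i :=
      mul_le_mul_of_nonneg_right hc2 hTsum
    rw [hTk] at key
    nlinarith [key, hsum2]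


lemma B_add_left (a b y : Fin p → ℝ) : B Φ (a + b) y = B Φ a y + B Φ b y := by
  unfold B
  rw [← Finset.sum_add_distrib]
  refine Finset.sum_congr rfl fun i _ => ?_
  simp [Matrix.mulVec_add]
  ring

lemma sqrt_add_le (u v : ℝ) (hu : 0 ≤ u) (hv : 0 ≤ v) :
    Real.sqrt u + Real.sqrt v ≤ Real.sqrt 2 * Real.sqrt (u + v) := by
  rw [← Real.sqrt_mul (by norm_num)]
  rw [show Real.sqrt u + Real.sqrt v = Real.sqrt u + Real.sqrt v from rfl]
  refine (Real.le_sqrt (by positivity) (by positivity)).2 ?_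
  nlinarith [sq_nonneg (Real.sqrt u - Real.sqrt v), Real.sq_sqrt hu, Real.sq_sqrt hv,
    Real.sqrt_nonneg u, Real.sqrt_nonneg v]

lemma theta_big (k : ℕ) (x y : Fin p → ℝ) (hx : IsSparse (2 * k) x) (hy : IsSparse k y)
    (hd : ∀ i, x i = 0 ∨ y i = 0) :
    |B Φ x y| ≤ Real.sqrt 2 * ripConst Φ (2 * k) * (Real.sqrt (N x) * Real.sqrt (N y)) := by
  classical
  set s := Finset.univ.filter (fun i => x i ≠ 0) with hsdef
  have hs : s.card ≤ 2 * k := hx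
  obtain ⟨u, hus, huc⟩ := Finset.exists_subset_card_eq (min_le_right k s.card)
  set a := fun i => if i ∈ u then x i else 0 with hadef
  set b := fun i => if i ∈ u then 0 else x i with hbdef
  have hab : a + b = x := funext fun i => by by_cases h : i ∈ u <;> simp [hadef, hbdef, h]
  have hak : IsSparse k a := by
    refine le_trans (le_trans (Finset.card_le_card ?_) huc.le) (min_le_left _ _)
    intro i hi
    simp only [Finset.mem_filter, Finset.mem_univ, true_and, hadef] at hi
    by_contra h
    exact hi (by simp [h])
  have hbk : IsSparse k b := by
    have hsub : Finset.univ.filter (fun i => b i ≠ 0) ⊆ s \ u := by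
      intro i hi
      simp only [Finset.mem_filter, Finset.mem_univ, true_and, hbdef] at hi
      by_cases h : i ∈ u
      · simp [h] at hi
      · simp [h] at hi
        exact Finset.mem_sdiff.2 ⟨Finset.mem_filter.2 ⟨Finset.mem_univ i, hi⟩, h⟩
    refine le_trans (Finset.card_le_card hsub) ?_
    rw [Finset.card_sdiff_of_subset hus]
    omega
  have hday : ∀ i, a i = 0 ∨ y i = 0 := fun i => by
    rcases hd i with h | h
    · exact Or.inl (by simp [hadef, h])
    · exact Or.inr h
  have hdby : ∀ i, b i = 0 ∨ y i = 0 := fun i => by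
    rcases hd i with h | h
    · exact Or.inl (by simp [hbdef, h])
    · exact Or.inr h
  have hNab : N a + N b = N x := by
    unfold N
    rw [← Finset.sum_add_distrib]
    refine Finset.sum_congr rfl fun i _ => ?_
    by_cases h : i ∈ u <;> simp [hadef, hbdef, h]
  have hNa : 0 ≤ N a := N_nonneg a
  have hNb : 0 ≤ N b := N_nonneg b
  have h1 := theta_kk Φ k a y hak hy hday
  have h2 := theta_kk Φ k b y hbk hy hdby
  have hBsplit : B Φ x y = B Φ a y + B Φ b y := by rw [← hab, B_add_left]
  have hsqrt : Real.sqrt (N a) + Real.sqrt (N b) ≤ Real.sqrt 2 * Real.sqrt (N x) := by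
    rw [← hNab]
    exact sqrt_add_le _ _ hNa hNb
  have hδ := rip_nonneg Φ (2 * k)
  have hy0 := Real.sqrt_nonneg (N y)
  calc |B Φ x y| ≤ |B Φ a y| + |B Φ b y| := hBsplit ▸ abs_add_le _ _
    _ ≤ ripConst Φ (2 * k) * (Real.sqrt (N a) * Real.sqrt (N y)) +
        ripConst Φ (2 * k) * (Real.sqrt (N b) * Real.sqrt (N y)) := add_le_add h1 h2
    _ = ripConst Φ (2 * k) * Real.sqrt (N y) * (Real.sqrt (N a) + Real.sqrt (N b)) := by ring
    _ ≤ ripConst Φ (2 * k) * Real.sqrt (N y) * (Real.sqrt 2 * Real.sqrt (N x)) := by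
        exact mul_le_mul_of_nonneg_left hsqrt (by positivity)
    _ = Real.sqrt 2 * ripConst Φ (2 * k) * (Real.sqrt (N x) * Real.sqrt (N y)) := by ring

end RipAux

set_option maxHeartbeats 1000000 in
open RipAux in
theorem ripConst_three_le (n p k : ℕ) (Φ : Matrix (Fin n) (Fin p) ℝ)
    (hk : 0 < k) (hp : 3 * k ≤ p) :
    ripConst Φ (3 * k) ≤
      (1/3 : ℝ) * ripConst Φ k + (Real.sqrt 2 + 2/3) * ripConst Φ (2 * k) := by
  classical
  have hδ1 : 0 ≤ ripConst Φ k := rip_nonneg Φ k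
  have hδ2 : 0 ≤ ripConst Φ (2 * k) := rip_nonneg Φ (2 * k)
  have hmono : ripConst Φ k ≤ ripConst Φ (2 * k) := rip_mono Φ (by omega)
  have hs2 : (0:ℝ) ≤ Real.sqrt 2 := Real.sqrt_nonneg 2
  have hS0 : 0 ≤ (1/3 : ℝ) * ripConst Φ k + (Real.sqrt 2 + 2/3) * ripConst Φ (2 * k) := by
    nlinarith
  have hmem : (1/3 : ℝ) * ripConst Φ k + (Real.sqrt 2 + 2/3) * ripConst Φ (2 * k)
      ∈ ripSet Φ (3 * k) := by
    refine ⟨hS0, fun c hc => ?_⟩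
    set s := Finset.univ.filter (fun i => c i ≠ 0) with hsdef
    obtain ⟨T, hTs, hTcard, hTsum⟩ :=
      exists_topk (fun i => (c i)^2) s k hk hc (fun i _ => sq_nonneg _)
    set y := fun i => if i ∈ T then c i else 0 with hydef
    set x := fun i => if i ∈ T then 0 else c i with hxdef
    have hxy : x + y = c := funext fun i => by by_cases h : i ∈ T <;> simp [hxdef, hydef, h]
    have hdxy : ∀ i, x i = 0 ∨ y i = 0 := fun i => by
      by_cases h : i ∈ T
      · exact Or.inl (by simp [hxdef, h])
      · exact Or.inr (by simp [hydef, h])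
    have hyk : IsSparse k y := by
      refine le_trans (le_trans (Finset.card_le_card ?_) hTcard.le) (min_le_left _ _)
      intro i hi
      simp only [Finset.mem_filter, Finset.mem_univ, true_and, hydef] at hi
      by_contra h
      exact hi (by simp [h])
    have hx2k : IsSparse (2 * k) x := by
      have hsub : Finset.univ.filter (fun i => x i ≠ 0) ⊆ s \ T := by
        intro i hi
        simp only [Finset.mem_filter, Finset.mem_univ, true_and, hxdef] at hi
        by_cases h : i ∈ T
        · simp [h] at hi
        · simp [h] at hi
          exact Finset.mem_sdiff.2 ⟨Finset.mem_filter.2 ⟨Finset.mem_univ i, hi⟩, h⟩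
      refine le_trans (Finset.card_le_card hsub) ?_
      rw [Finset.card_sdiff_of_subset hTs]
      have hsc : s.card ≤ 3 * k := hc
      omega
    have hNsplit : N x + N y = N c := by
      unfold N
      rw [← Finset.sum_add_distrib]
      refine Finset.sum_congr rfl fun i _ => ?_
      by_cases h : i ∈ T <;> simp [hxdef, hydef, h]
    have hNy : N y = ∑ i ∈ T, (c i)^2 := by
      unfold N
      have he : ∀ i, (y i)^2 = if i ∈ T then (c i)^2 else 0 := fun i => by
        by_cases h : i ∈ T <;> simp [hydef, h]
      simp only [he]
      rw [Finset.sum_ite_mem, Finset.univ_inter]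
    have hNc : N c = ∑ i ∈ s, (c i)^2 := by
      unfold N
      refine (Finset.sum_subset (Finset.filter_subset _ _) fun i _ hi => ?_).symm
      simp only [hsdef, Finset.mem_filter, Finset.mem_univ, true_and, not_not] at hi
      simp [hi]
    have h3 : N c ≤ 3 * N y := by
      have hsd := Finset.sum_sdiff (f := fun i => (c i)^2) hTs
      rw [hNy, hNc]
      linarith
    have hQ : Q Φ c = Q Φ x + 2 * B Φ x y + Q Φ y := by rw [← hxy, Q_add]
    have hx_bounds := (rip_mem Φ (2 * k)).2 x hx2k
    have hy_bounds := (rip_mem Φ k).2 y hyk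
    have hB := theta_big Φ k x y hx2k hyk hdxy
    clear_value x y s
    clear hxy hdxy hyk hx2k hTsum hTcard hTs hNy hNc hsdef hydef hxdef hc
    have hsq : Real.sqrt (N x) * Real.sqrt (N y) ≤ (N x + N y) / 2 := by
      nlinarith [sq_nonneg (Real.sqrt (N x) - Real.sqrt (N y)),
        Real.sq_sqrt (N_nonneg x), Real.sq_sqrt (N_nonneg y)]
    have hBup : B Φ x y ≤ Real.sqrt 2 * ripConst Φ (2 * k) * ((N x + N y) / 2) := by
      have h1 : B Φ x y ≤ |B Φ x y| := le_abs_self _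
      nlinarith [mul_nonneg hs2 hδ2]
    have hBlo : -(Real.sqrt 2 * ripConst Φ (2 * k) * ((N x + N y) / 2)) ≤ B Φ x y := by
      have h1 : -|B Φ x y| ≤ B Φ x y := neg_abs_le _
      nlinarith [mul_nonneg hs2 hδ2]
    have hNx0 : 0 ≤ N x := N_nonneg x
    have hNy0 : 0 ≤ N y := N_nonneg y
    have hmix : ripConst Φ (2 * k) * N x + ripConst Φ k * N y ≤
        (ripConst Φ k / 3 + 2 * ripConst Φ (2 * k) / 3) * (N x + N y) := by
      nlinarith [mul_nonneg (sub_nonneg.2 hmono) (by linarith : (0:ℝ) ≤ 2 * N y - N x)]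
    constructor
    · rw [hQ, ← hNsplit]
      linarith [hx_bounds.1, hy_bounds.1, hBlo, hmix]
    · rw [hQ, ← hNsplit]
      linarith [hx_bounds.2, hy_bounds.2, hBup, hmix]
  calc ripConst Φ (3 * k) = sInf (ripSet Φ (3 * k)) := ripConst_eq Φ (3 * k)
    _ ≤ _ := csInf_le (ripSet_bddBelow Φ (3 * k)) hmem
end
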